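/- Let $n \geq 3$ and $m \geq 1$. The simplex $T_m = T_{(n/2,\, mn/2,\, n, \dots, n)} \subset \mathbb{R}_{\geq 0}^n$ has the smallest volume among all simplices $T_b$, $b \in (0,\infty)^n$, whose closures contain both points $(1, 0, 1, \dots, 1)$ and $(0, m, 1, \dots, 1)$, and it is the unique such minimizer. -/

import Mathlib

open MeasureTheory Finset

lemma amgm_aux {ι : Type*} (t : Finset ι) (ht : t.Nonempty) (z : ι → ℝ) (s : ℝ)
    (hz : ∀ i ∈ t, 0 < z i) (hs : ∑ i ∈ t, z i ≤ s) :
    (∏ i ∈ t, z i ≤ (s / t.card) ^ t.card) ∧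
      (∏ i ∈ t, z i = (s / t.card) ^ t.card → ∀ i ∈ t, z i = s / t.card) := by
  have hN : (0 : ℝ) < t.card := by
    exact_mod_cast Finset.card_pos.2 ht
  set N : ℝ := (t.card : ℝ) with hNdef
  set w : ι → ℝ := fun _ => 1 / N with hw
  have h₀ : ∀ i ∈ t, (0:ℝ) < w i := fun i _ => by positivity
  have h₁ : ∑ i ∈ t, w i = 1 := by
    simp [hw, Finset.sum_const, hNdef]
    field_simp
  have hmem : ∀ i ∈ t, z i ∈ Set.Ioi (0:ℝ) := fun i hi => hz i hi
  have hsumpos : 0 < ∑ i ∈ t, z i := Finset.sum_pos hz ht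
  have hspos : 0 < s := lt_of_lt_of_le hsumpos hs
  have hwz : ∑ i ∈ t, w i • z i = (∑ i ∈ t, z i) / N := by
    rw [Finset.sum_div]
    exact Finset.sum_congr rfl fun i _ => by simp only [hw, smul_eq_mul]; ring
  have jensen : ∑ i ∈ t, w i • Real.log (z i) ≤ Real.log (∑ i ∈ t, w i • z i) :=
    (strictConcaveOn_log_Ioi.concaveOn).le_map_sum (fun i hi => (h₀ i hi).le) h₁ hmem
  have hmono : Real.log (∑ i ∈ t, w i • z i) ≤ Real.log (s / N) := by
    rw [hwz]
    exact Real.log_le_log (by positivity) (by gcongr)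
  have hlogsum : Real.log (∏ i ∈ t, z i) = ∑ i ∈ t, Real.log (z i) :=
    Real.log_prod (fun i hi => (hz i hi).ne')
  have hfac : ∑ i ∈ t, w i • Real.log (z i) = (∑ i ∈ t, Real.log (z i)) / N := by
    rw [Finset.sum_div]
    exact Finset.sum_congr rfl fun i _ => by simp only [hw, smul_eq_mul]; ring
  have key : Real.log (∏ i ∈ t, z i) ≤ Real.log ((s / N) ^ t.card) := by
    rw [hlogsum, Real.log_pow]
    have := jensen.trans hmono
    rw [hfac] at this
    calc ∑ i ∈ t, Real.log (z i) = N * ((∑ i ∈ t, Real.log (z i)) / N) := by field_simp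
      _ ≤ N * Real.log (s / N) := by nlinarith
      _ = (t.card : ℝ) * Real.log (s / N) := rfl
  have hprodpos : 0 < ∏ i ∈ t, z i := Finset.prod_pos hz
  have hpowpos : (0:ℝ) < (s / N) ^ t.card := by positivity
  constructor
  · exact (Real.log_le_log_iff hprodpos hpowpos).1 key
  · intro heq i hi
    have hA' : ∑ i ∈ t, w i • Real.log (z i) = Real.log (s / N) := by
      have h1 : ∑ i ∈ t, Real.log (z i) = N * Real.log (s / N) := by
        have h2 := congrArg Real.log heq
        rw [hlogsum, Real.log_pow] at h2
        exact h2
      rw [hfac, h1, mul_div_cancel_left₀ _ hN.ne']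
    have hBC : Real.log (∑ i ∈ t, w i • z i) = Real.log (s / N) :=
      le_antisymm hmono (hA' ▸ jensen)
    have hsum_eq : ∑ i ∈ t, z i = s := by
      have := Real.log_injOn_pos (Set.mem_Ioi.2 (by rw [hwz]; positivity))
        (Set.mem_Ioi.2 (by positivity)) hBC
      rw [hwz] at this
      field_simp at this
      linarith [this]
    have hAB : Real.log (∑ i ∈ t, w i • z i) = ∑ i ∈ t, w i • Real.log (z i) := by
      rw [hBC, hA']
    have := (strictConcaveOn_log_Ioi.map_sum_eq_iff h₀ h₁ hmem).1 hAB i hi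
    rw [this, hwz, hsum_eq]


/-- For `n ≥ 3` and `m ≥ 1`, the simplex `T_{(n/2, mn/2, n, …, n)}` has the smallest
volume among all simplices `T_b`, `b ∈ (0,∞)ⁿ`, whose closures contain both points
`(1,0,1,…,1)` and `(0,m,1,…,1)`, and it is the unique minimizer.  Since
`vol(T_b) = b₁⋯bₙ/n!`, this amounts to: subject to `1/b₁ + ∑_{j≥3} 1/b j ≤ 1` and
`m/b₂ + ∑_{j≥3} 1/b j ≤ 1`, the product `b₁⋯bₙ` is uniquely minimized at
`b = (n/2, mn/2, n, …, n)`. -/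
theorem simplex_min_Tm (n : ℕ) (hn : 3 ≤ n) (m : ℝ) (hm : 1 ≤ m)
    (i₀ : Fin n) (hi₀ : (i₀ : ℕ) = 0) (i₁ : Fin n) (hi₁ : (i₁ : ℕ) = 1)
    (c : Fin n → ℝ)
    (hc : c = fun j : Fin n => if (j : ℕ) = 0 then (n : ℝ) / 2
      else if (j : ℕ) = 1 then m * n / 2 else (n : ℝ)) :
    ((∀ j, 0 < c j) ∧
      1 / c i₀ + ∑ j ∈ Finset.univ.filter (fun j : Fin n => 2 ≤ (j : ℕ)), 1 / c j ≤ 1 ∧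
      m / c i₁ + ∑ j ∈ Finset.univ.filter (fun j : Fin n => 2 ≤ (j : ℕ)), 1 / c j ≤ 1) ∧
    (∀ b : Fin n → ℝ, (∀ j, 0 < b j) →
      1 / b i₀ + ∑ j ∈ Finset.univ.filter (fun j : Fin n => 2 ≤ (j : ℕ)), 1 / b j ≤ 1 →
      m / b i₁ + ∑ j ∈ Finset.univ.filter (fun j : Fin n => 2 ≤ (j : ℕ)), 1 / b j ≤ 1 →
      (∏ j, c j) ≤ (∏ j, b j) ∧ ((∏ j, b j) = (∏ j, c j) → b = c)) := by
  have hn0 : (0:ℝ) < n := by positivity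
  have hm0 : (0:ℝ) < m := lt_of_lt_of_le one_pos hm
  set F : Finset (Fin n) := Finset.univ.filter (fun j : Fin n => 2 ≤ (j : ℕ)) with hF
  have hI0 : i₀ ∉ F := by simp [hF, hi₀]
  have hI1 : i₁ ∉ F := by simp [hF, hi₁]
  have hne : i₀ ≠ i₁ := by intro h; rw [h, hi₁] at hi₀; omega
  have hI0' : i₀ ∉ insert i₁ F := by simp [hne, hI0]
  have huniv : (Finset.univ : Finset (Fin n)) = insert i₀ (insert i₁ F) := by
    ext j
    simp only [Finset.mem_univ, Finset.mem_insert, hF, Finset.mem_filter, true_and, true_iff]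
    rcases Nat.lt_or_ge (j : ℕ) 2 with h | h
    · interval_cases hj : (j : ℕ)
      · left; exact Fin.ext (by omega)
      · right; left; exact Fin.ext (by omega)
    · right; right; exact h
  have hsplit : ∀ f : Fin n → ℝ, ∏ j, f j = f i₀ * (f i₁ * ∏ j ∈ F, f j) := by
    intro f
    rw [huniv, Finset.prod_insert hI0', Finset.prod_insert hI1]
  have hssplit : ∀ f : Fin n → ℝ, ∑ j, f j = f i₀ + (f i₁ + ∑ j ∈ F, f j) := by
    intro f
    rw [huniv, Finset.sum_insert hI0', Finset.sum_insert hI1]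
  have hcardn : n = F.card + 2 := by
    have h := congrArg Finset.card huniv
    rw [Finset.card_univ, Fintype.card_fin, Finset.card_insert_of_notMem hI0',
      Finset.card_insert_of_notMem hI1] at h
    omega
  have hcardF' : F.card = n - 2 := by omega
  have hcardF : (F.card : ℝ) = (n : ℝ) - 2 := by
    have := congrArg (Nat.cast : ℕ → ℝ) hcardn
    push_cast at this
    linarith
  -- values of c
  have hc0 : c i₀ = (n : ℝ) / 2 := by rw [hc]; simp [hi₀]
  have hc1 : c i₁ = m * n / 2 := by rw [hc]; simp [hi₁]
  have hcF : ∀ j ∈ F, c j = (n : ℝ) := by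
    intro j hj
    rw [hF, Finset.mem_filter] at hj
    rw [hc]; simp only
    rw [if_neg (by omega), if_neg (by omega)]
  have hcpos : ∀ j, 0 < c j := by
    intro j; rw [hc]; dsimp only
    split_ifs
    · positivity
    · positivity
    · exact hn0
  have hSc : ∑ j ∈ F, 1 / c j = ((n : ℝ) - 2) / n := by
    rw [Finset.sum_congr rfl (fun j hj => by rw [hcF j hj])]
    rw [Finset.sum_const, nsmul_eq_mul, hcardF]
    field_simp
  have hprodc : ∏ j, c j = m * (n : ℝ) ^ n / 4 := by
    rw [hsplit, hc0, hc1, Finset.prod_congr rfl hcF, Finset.prod_const, hcardF']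
    have : (n : ℝ) ^ n = (n : ℝ) ^ 2 * (n : ℝ) ^ (n - 2) := by
      rw [← pow_add]; congr 1; omega
    rw [this]; ring
  refine ⟨⟨hcpos, ?_, ?_⟩, ?_⟩
  · rw [hc0, hSc, div_div_eq_mul_div, div_add_div _ _ (ne_of_gt hn0) (ne_of_gt hn0),
      div_le_one (by positivity)]
    nlinarith
  · rw [hc1, hSc]
    have : m / (m * n / 2) = 2 / n := by
      rw [div_eq_div_iff (by positivity) (ne_of_gt hn0)]; ring
    rw [this, div_add_div _ _ (ne_of_gt hn0) (ne_of_gt hn0), div_le_one (by positivity)]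
    nlinarith
  · intro b hb h1 h2
    set z : Fin n → ℝ := fun j => if j = i₀ then 1 / b i₀ else if j = i₁ then m / b i₁ else 2 / b j with hz
    have hz0 : z i₀ = 1 / b i₀ := by simp [hz]
    have hz1 : z i₁ = m / b i₁ := by simp [hz, hne.symm]
    have hzpos : ∀ j ∈ Finset.univ, 0 < z j := by
      intro j _; rw [hz]; dsimp only
      split_ifs
      · exact div_pos one_pos (hb _)
      · exact div_pos hm0 (hb _)
      · exact div_pos two_pos (hb _)
    have hzF : ∀ j ∈ F, z j = 2 / b j := by
      intro j hj
      rw [hF, Finset.mem_filter] at hj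
      rw [hz]; dsimp only
      rw [if_neg (by intro h; rw [h, hi₀] at hj; omega),
        if_neg (by intro h; rw [h, hi₁] at hj; omega)]
    have hsum : ∑ j, z j ≤ 2 := by
      have hs : ∑ j, z j = 1 / b i₀ + (m / b i₁ + ∑ j ∈ F, 2 / b j) := by
        rw [hssplit z, hz0, hz1, Finset.sum_congr rfl hzF]
      have h2F : ∑ j ∈ F, 2 / b j = 2 * ∑ j ∈ F, 1 / b j := by
        rw [Finset.mul_sum]; exact Finset.sum_congr rfl (fun j _ => by ring)
      rw [hs, h2F]; linarith
    have hcard : (Finset.univ : Finset (Fin n)).card = n := by simp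
    have ham := amgm_aux Finset.univ ⟨i₀, Finset.mem_univ i₀⟩ z 2 hzpos hsum
    rw [hcard] at ham
    have hbpos : (0:ℝ) < ∏ j, b j := Finset.prod_pos (fun j _ => hb j)
    have hprodz : ∏ j, z j = m * 2 ^ (n - 2) / ∏ j, b j := by
      rw [hsplit z, hsplit b, hz0, hz1, Finset.prod_congr rfl hzF,
        Finset.prod_div_distrib, Finset.prod_const, hcardF']
      have hb0 := hb i₀; have hb1 := hb i₁
      have hbF : (0:ℝ) < ∏ j ∈ F, b j := Finset.prod_pos (fun j _ => hb j)
      field_simp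
    have hzp : (0:ℝ) < (2 / (n:ℝ)) ^ n := by positivity
    have hkey : m * 2 ^ (n - 2) / ((2 / (n:ℝ)) ^ n) = m * (n : ℝ) ^ n / 4 := by
      have e2 : (2:ℝ) ^ n = 4 * 2 ^ (n - 2) := by
        rw [show n = 2 + (n - 2) by omega, pow_add,
          show 2 + (n - 2) - 2 = n - 2 by omega]
        norm_num
      have h2p : (0:ℝ) < (2:ℝ) ^ (n - 2) := by positivity
      rw [div_pow, div_div_eq_mul_div, e2]
      rw [div_eq_div_iff (by positivity) (by norm_num : (4:ℝ) ≠ 0)]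
      ring
    have hle : ∏ j, c j ≤ ∏ j, b j := by
      have h1' : m * 2 ^ (n - 2) / ∏ j, b j ≤ (2 / (n:ℝ)) ^ n := hprodz ▸ ham.1
      rw [div_le_iff₀ hbpos] at h1'
      rw [hprodc, ← hkey, div_le_iff₀ hzp]
      nlinarith
    refine ⟨hle, ?_⟩
    intro heq
    have hzeq : ∏ j, z j = (2 / (n:ℝ)) ^ n := by
      have hnne : (n:ℝ) ≠ 0 := ne_of_gt hn0
      have h2p : ((2:ℝ) / n) ^ n ≠ 0 := ne_of_gt hzp
      rw [hprodz, heq, hprodc, ← hkey]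
      rw [div_eq_iff (by positivity : m * (2:ℝ) ^ (n - 2) / ((2:ℝ) / (n:ℝ)) ^ n ≠ 0)]
      field_simp
    have hall := ham.2 hzeq
    funext j
    have hj : j = i₀ ∨ j = i₁ ∨ j ∈ F := by
      have : j ∈ (Finset.univ : Finset (Fin n)) := Finset.mem_univ j
      rw [huniv] at this
      simpa using this
    rcases hj with hji | hji | hj
    · rw [hji, hc0]
      have h := hall i₀ (Finset.mem_univ i₀)
      rw [hz0, div_eq_div_iff (ne_of_gt (hb i₀)) (ne_of_gt hn0)] at h
      linarith
    · rw [hji, hc1]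
      have h := hall i₁ (Finset.mem_univ i₁)
      rw [hz1, div_eq_div_iff (ne_of_gt (hb i₁)) (ne_of_gt hn0)] at h
      linarith
    · have h := hall j (Finset.mem_univ j)
      rw [hzF j hj, div_eq_div_iff (ne_of_gt (hb j)) (ne_of_gt hn0)] at h
      rw [hcF j hj]
      linarith
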